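/- There exists a weight sequence M (with q > 1 fixed, m_{n-1} = q^{2n+1} if n is not of the form 2^k + 1, and m_{n-1} = q^{2n-1} if n = 2^k + 1 for some k ≥ 0) such that the sequence (m_{n-1}/n)_{n≥1} is not eventually increasing, while (m_n/n^r)_{n≥1} is almost increasing for every natural number r. -/

import Mathlib

open scoped Classical in
/-- The quotient sequence of the example: `m p` (which is `m_{n-1}` for `n = p + 1`)
equals `q ^ (2 p + 1)` if `p = 2 ^ k` for some `k` (i.e. `n = 2 ^ k + 1`),
and `q ^ (2 p + 3)` otherwise. -/
noncomputable def exampleQuot (q : ℝ) (p : ℕ) : ℝ :=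
  if ∃ k : ℕ, p = 2 ^ k then q ^ (2 * p + 1) else q ^ (2 * p + 3)

theorem example_not_eventually_increasing_but_almost_increasing (q : ℝ) (hq : 1 < q) :
    (¬ ∃ N : ℕ, 1 ≤ N ∧ ∀ n : ℕ, N ≤ n →
        exampleQuot q (n - 1) / (n : ℝ) ≤ exampleQuot q n / ((n : ℝ) + 1)) ∧
    (∀ r : ℕ, ∃ a > (0 : ℝ), ∀ p q' : ℕ, 1 ≤ p → p ≤ q' →
        exampleQuot q p / (p : ℝ) ^ r ≤ a * (exampleQuot q q' / (q' : ℝ) ^ r)) := by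
  have hq0 : (0 : ℝ) < q := lt_trans one_pos hq
  have hub : ∀ p : ℕ, exampleQuot q p ≤ q ^ (2 * p + 3) := by
    intro p
    rw [exampleQuot]
    split_ifs
    · exact pow_le_pow_right₀ hq.le (by omega)
    · exact le_rfl
  have hlb : ∀ p : ℕ, q ^ (2 * p + 1) ≤ exampleQuot q p := by
    intro p
    rw [exampleQuot]
    split_ifs
    · exact le_rfl
    · exact pow_le_pow_right₀ hq.le (by omega)
  constructor
  · rintro ⟨N, hN1, hN⟩
    set n := 2 ^ (N + 2) with hn
    have hnN : N ≤ n := le_of_lt (lt_of_lt_of_le (Nat.lt_two_pow_self (n := N))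
      (Nat.pow_le_pow_right (by norm_num) (by omega)))
    have hn8 : 8 ≤ n := by
      have h3 : (2 : ℕ) ^ 3 ≤ 2 ^ (N + 2) := Nat.pow_le_pow_right (by norm_num) (by omega)
      norm_num at h3
      omega
    have h := hN n hnN
    have hodd : ¬ ∃ k : ℕ, n - 1 = 2 ^ k := by
      rintro ⟨k, hk⟩
      have hn2 : n = 2 * 2 ^ (N + 1) := by rw [hn]; ring
      rcases k with _ | m
      · omega
      · have : 2 ^ (m + 1) = 2 * 2 ^ m := by ring
        have hm : 1 ≤ 2 ^ m := Nat.one_le_two_pow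
        omega
    have h1 : exampleQuot q (n - 1) = q ^ (2 * n + 1) := by
      rw [exampleQuot, if_neg hodd]
      congr 1
      omega
    have h2 : exampleQuot q n = q ^ (2 * n + 1) := by
      rw [exampleQuot, if_pos ⟨N + 2, rfl⟩]
    rw [h1, h2] at h
    have hX : (0 : ℝ) < q ^ (2 * n + 1) := pow_pos hq0 _
    have hnpos : (0 : ℝ) < (n : ℝ) := by
      exact_mod_cast Nat.pos_of_ne_zero (by omega)
    rw [div_le_div_iff₀ hnpos (by linarith)] at h
    nlinarith
  · intro r
    have h2q : (1 : ℝ) < q ^ 2 := by nlinarith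
    have ht : Filter.Tendsto (fun k : ℕ => (k : ℝ) ^ r / (q ^ 2) ^ k)
        Filter.atTop (nhds 0) := tendsto_pow_const_div_const_pow_of_one_lt r h2q
    obtain ⟨C0, hC0⟩ := ht.bddAbove_range
    set C : ℝ := max C0 1 with hC
    have hC1 : (1 : ℝ) ≤ C := le_max_right _ _
    have hCpos : (0 : ℝ) < C := lt_of_lt_of_le one_pos hC1
    have hCk : ∀ k : ℕ, (k : ℝ) ^ r ≤ C * (q ^ 2) ^ k := by
      intro k
      have h1 : (k : ℝ) ^ r / (q ^ 2) ^ k ≤ C0 := hC0 (Set.mem_range_self k)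
      have hpow : (0 : ℝ) < (q ^ 2) ^ k := by positivity
      have h2 : (k : ℝ) ^ r / (q ^ 2) ^ k ≤ C := h1.trans (le_max_left _ _)
      calc (k : ℝ) ^ r = ((k : ℝ) ^ r / (q ^ 2) ^ k) * (q ^ 2) ^ k := by
            field_simp
        _ ≤ C * (q ^ 2) ^ k := mul_le_mul_of_nonneg_right h2 hpow.le
    refine ⟨C * q ^ 4, by positivity, ?_⟩
    intro p q' hp hpq
    set d : ℕ := q' - p with hd
    have hq'eq : q' = p + d := by omega
    have hp1 : (1 : ℝ) ≤ (p : ℝ) := by exact_mod_cast hp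
    have hppos : (0 : ℝ) < (p : ℝ) ^ r := by positivity
    have hq'1 : (1 : ℝ) ≤ (q' : ℝ) := by exact_mod_cast (hp.trans hpq)
    have hq'pos : (0 : ℝ) < (q' : ℝ) ^ r := by positivity
    have hdnn : (0 : ℝ) ≤ (d : ℝ) := Nat.cast_nonneg d
    -- bound q'^r ≤ p^r * (d+1)^r
    have hle : (q' : ℝ) ≤ (p : ℝ) * ((d : ℝ) + 1) := by
      have : (q' : ℝ) = (p : ℝ) + (d : ℝ) := by
        rw [hq'eq]; push_cast; ring
      nlinarith
    have hq'r : (q' : ℝ) ^ r ≤ (p : ℝ) ^ r * ((d : ℝ) + 1) ^ r := by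
      calc (q' : ℝ) ^ r ≤ ((p : ℝ) * ((d : ℝ) + 1)) ^ r :=
            pow_le_pow_left₀ (Nat.cast_nonneg q') hle r
        _ = (p : ℝ) ^ r * ((d : ℝ) + 1) ^ r := mul_pow _ _ _
    have hCd : ((d : ℝ) + 1) ^ r ≤ C * (q ^ 2) ^ (d + 1) := by
      have := hCk (d + 1)
      push_cast at this
      convert this using 2 <;> push_cast <;> ring
    have hexp : q ^ (2 * p + 3) * (q ^ 2) ^ (d + 1) = q ^ 4 * q ^ (2 * q' + 1) := by
      rw [← pow_mul, ← pow_add, ← pow_add]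
      congr 1
      omega
    -- key inequality on the bounding powers
    have hkey : q ^ (2 * p + 3) / (p : ℝ) ^ r ≤
        C * q ^ 4 * (q ^ (2 * q' + 1) / (q' : ℝ) ^ r) := by
      rw [← mul_div_assoc, div_le_div_iff₀ hppos hq'pos]
      have hqp3 : (0 : ℝ) < q ^ (2 * p + 3) := pow_pos hq0 _
      calc q ^ (2 * p + 3) * (q' : ℝ) ^ r
          ≤ q ^ (2 * p + 3) * ((p : ℝ) ^ r * (C * (q ^ 2) ^ (d + 1))) := by
            apply mul_le_mul_of_nonneg_left _ hqp3.le
            calc (q' : ℝ) ^ r ≤ (p : ℝ) ^ r * ((d : ℝ) + 1) ^ r := hq'r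
              _ ≤ (p : ℝ) ^ r * (C * (q ^ 2) ^ (d + 1)) :=
                  mul_le_mul_of_nonneg_left hCd hppos.le
        _ = (q ^ (2 * p + 3) * (q ^ 2) ^ (d + 1)) * C * (p : ℝ) ^ r := by ring
        _ = C * q ^ 4 * q ^ (2 * q' + 1) * (p : ℝ) ^ r := by rw [hexp]; ring
    calc exampleQuot q p / (p : ℝ) ^ r ≤ q ^ (2 * p + 3) / (p : ℝ) ^ r := by
          gcongr
          exact hub p
      _ ≤ C * q ^ 4 * (q ^ (2 * q' + 1) / (q' : ℝ) ^ r) := hkey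
      _ ≤ C * q ^ 4 * (exampleQuot q q' / (q' : ℝ) ^ r) := by
          apply mul_le_mul_of_nonneg_left _ (by positivity)
          gcongr
          exact hlb q'
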